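/- arXiv:1512.01615 — 7 statements merged into one kernel-verified Lean document; each statement's English description precedes it below -/
import Mathlib

section
/- For the congruence network G(r,N) with r ≥ 1, for every integer k ≥ 1 such that r·(k+1) ≤ N − r, the number of nodes m with r < m ≤ N whose out-degree equals k is exactly ⌊(N−r)/k⌋ − ⌊(N−r)/(k+1)⌋. -/
/-- Out-degree of node `m` in `G(r,N)` equals `⌊(N-r)/m⌋` when `r < m`. -/
lemma congruence_outdeg (r N m : ℕ) (hr : 1 ≤ r) (hrm : r < m) (hmN : m ≤ N) :
    ((Finset.Ioc m N).filter (fun j => j % m = r)).card = (N - r) / m := by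
  have hm0 : 0 < m := lt_of_le_of_lt (Nat.zero_le r) hrm
  have hrN : r ≤ N := le_trans (le_of_lt hrm) hmN
  have himg : (Finset.Ioc m N).filter (fun j => j % m = r)
      = (Finset.Icc 1 ((N - r) / m)).image (fun q => r + q * m) := by
    ext j
    simp only [Finset.mem_filter, Finset.mem_Ioc, Finset.mem_image, Finset.mem_Icc]
    constructor
    · rintro ⟨⟨hmj, hjN⟩, hmod⟩
      have hdm := Nat.div_add_mod j m
      rw [hmod] at hdm
      refine ⟨j / m, ⟨?_, ?_⟩, ?_⟩
      · rcases Nat.eq_zero_or_pos (j / m) with h0 | h0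
        · rw [h0, Nat.mul_zero] at hdm; omega
        · exact h0
      · refine (Nat.le_div_iff_mul_le hm0).mpr ?_
        rw [Nat.mul_comm]; omega
      · rw [Nat.mul_comm]; omega
    · rintro ⟨q, ⟨hq1, hq2⟩, rfl⟩
      have hle : q * m ≤ N - r := (Nat.le_div_iff_mul_le hm0).mp hq2
      have hm_le : m ≤ q * m := Nat.le_mul_of_pos_left m hq1
      refine ⟨⟨by omega, by omega⟩, ?_⟩
      simp [Nat.add_mul_mod_self_right, Nat.mod_eq_of_lt hrm]
  have hinj : Function.Injective (fun q => r + q * m) := by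
    intro a b h
    simp only at h
    have h2 : a * m = b * m := by omega
    exact Nat.eq_of_mul_eq_mul_right hm0 h2
  rw [himg, Finset.card_image_of_injective _ hinj, Nat.card_Icc]
  exact Nat.add_sub_cancel _ _

/-- In the congruence network `G(r,N)` with `r ≥ 1`, for every `k ≥ 1` with
`r·(k+1) ≤ N − r`, the number of nodes whose out-degree equals `k` is exactly
`⌊(N−r)/k⌋ − ⌊(N−r)/(k+1)⌋`. -/
theorem congruence_network_degree_count (r N : ℕ) (hr : 1 ≤ r) (hN : r < N)
    (k : ℕ) (hk : 1 ≤ k) (hkN : r * (k + 1) ≤ N - r) :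
    ((Finset.Ioc r N).filter
        (fun m => ((Finset.Ioc m N).filter (fun j => j % m = r)).card = k)).card
      = (N - r) / k - (N - r) / (k + 1) := by
  have hk0 : 0 < k := hk
  have hset : (Finset.Ioc r N).filter
      (fun m => ((Finset.Ioc m N).filter (fun j => j % m = r)).card = k)
      = Finset.Ioc ((N - r) / (k + 1)) ((N - r) / k) := by
    ext m
    simp only [Finset.mem_filter, Finset.mem_Ioc]
    constructor
    · rintro ⟨⟨hrm, hmN⟩, hdeg⟩
      rw [congruence_outdeg r N m hr hrm hmN] at hdeg
      have hm0 : 0 < m := by omega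
      have h1 : k * m ≤ N - r := by
        rw [← hdeg]; exact Nat.div_mul_le_self _ _
      have h2 : N - r < (k + 1) * m := by
        have hmod := Nat.div_add_mod (N - r) m
        have hlt : (N - r) % m < m := Nat.mod_lt _ hm0
        calc N - r < m * ((N - r) / m) + m := by omega
          _ = (k + 1) * m := by rw [hdeg]; ring
      refine ⟨Nat.div_lt_of_lt_mul h2, ?_⟩
      refine (Nat.le_div_iff_mul_le hk0).mpr ?_
      calc m * k = k * m := Nat.mul_comm _ _
        _ ≤ N - r := h1
    · rintro ⟨h1, h2⟩
      have hm0 : 0 < m := Nat.lt_of_le_of_lt (Nat.zero_le _) h1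
      have hkm' : m * k ≤ N - r := (Nat.le_div_iff_mul_le hk0).mp h2
      have hk1m : N - r < (k + 1) * m := by
        by_contra h
        push_neg at h
        have hle : m * (k + 1) ≤ N - r := by
          calc m * (k + 1) = (k + 1) * m := Nat.mul_comm _ _
            _ ≤ N - r := h
        have h3 : m ≤ (N - r) / (k + 1) := (Nat.le_div_iff_mul_le (by omega)).mpr hle
        exact Nat.lt_irrefl m (Nat.lt_of_le_of_lt h3 h1)
      have hrm : r < m := by nlinarith [hk1m, hkN]
      have hmk : m ≤ m * k := Nat.le_mul_of_pos_right m hk0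
      have hmN : m ≤ N := by omega
      refine ⟨⟨hrm, hmN⟩, ?_⟩
      rw [congruence_outdeg r N m hr hrm hmN]
      refine Nat.div_eq_of_lt_le ?_ ?_
      · calc k * m = m * k := Nat.mul_comm _ _
          _ ≤ N - r := hkm'
      · exact hk1m
  rw [hset, Nat.card_Ioc]
end

section
/- For fixed r ≥ 1 and fixed k ≥ 1, the fraction of nodes of the congruence network G(r,N) whose out-degree equals k, i.e. (1/(N−r)) · #{m : r < m ≤ N, out-degree of m equals k}, converges to 1/(k(k+1)) as N → ∞. -/
open Filter

/-- The out-degree of a node `m` of the congruence network equals `(N - r) / m`. -/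
lemma congruence_network_outdeg (r m N : ℕ) (hr : 1 ≤ r) (hm : r < m) :
    ((Finset.Ioc m N).filter (fun j => j % m = r)).card = (N - r) / m := by
  have hm0 : 0 < m := by omega
  have himg : (Finset.Ioc m N).filter (fun j => j % m = r)
      = (Finset.Icc 1 ((N - r) / m)).image (fun q => q * m + r) := by
    ext j
    simp only [Finset.mem_filter, Finset.mem_Ioc, Finset.mem_image, Finset.mem_Icc]
    constructor
    · rintro ⟨⟨hj1, hj2⟩, hj3⟩
      have hdm : m * (j / m) + r = j := by rw [← hj3]; exact Nat.div_add_mod j m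
      refine ⟨j / m, ⟨?_, ?_⟩, ?_⟩
      · rcases Nat.eq_zero_or_pos (j / m) with h | h
        · rw [h] at hdm; omega
        · exact h
      · rw [Nat.le_div_iff_mul_le hm0]
        have h1 : m * (j / m) = j - r := by omega
        rw [Nat.mul_comm, h1]
        exact Nat.sub_le_sub_right hj2 r
      · rw [Nat.mul_comm]; exact hdm
    · rintro ⟨q, ⟨hq1, hq2⟩, rfl⟩
      rw [Nat.le_div_iff_mul_le hm0] at hq2
      have h2 : m ≤ q * m := Nat.le_mul_of_pos_left m hq1
      refine ⟨⟨by omega, by omega⟩, ?_⟩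
      rw [Nat.add_comm, Nat.add_mul_mod_self_right]
      exact Nat.mod_eq_of_lt hm
  have hinj : Function.Injective (fun q : ℕ => q * m + r) := by
    intro a b h
    dsimp at h
    exact Nat.eq_of_mul_eq_mul_right hm0 (by omega)
  rw [himg, Finset.card_image_of_injective _ hinj, Nat.card_Icc, Nat.add_sub_cancel]

/-- For large `N`, the set of nodes with `(N - r) / m = k` is an interval. -/
lemma congruence_network_setB (r k N : ℕ) (hr : 1 ≤ r) (hk : 1 ≤ k)
    (hN : r * (k + 1) ≤ N - r) :
    (Finset.Ioc r N).filter (fun m => (N - r) / m = k)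
      = Finset.Ioc ((N - r) / (k + 1)) ((N - r) / k) := by
  set M := N - r with hM
  have hk0 : 0 < k := hk
  ext m
  simp only [Finset.mem_filter, Finset.mem_Ioc]
  constructor
  · rintro ⟨⟨hm1, hm2⟩, hd⟩
    have hm0 : 0 < m := by omega
    constructor
    · rw [Nat.div_lt_iff_lt_mul (by omega : 0 < k + 1)]
      have : M / m < k + 1 := by omega
      rw [Nat.div_lt_iff_lt_mul hm0] at this
      calc M < (k + 1) * m := this
        _ = m * (k + 1) := Nat.mul_comm _ _
    · rw [Nat.le_div_iff_mul_le hk0]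
      calc m * k = M / m * m * 1 := by rw [hd]; ring
        _ ≤ M := by simpa using Nat.div_mul_le_self M m
  · rintro ⟨h1, h2⟩
    have hrm : r ≤ M / (k + 1) := by
      rw [Nat.le_div_iff_mul_le (by omega : 0 < k + 1)]; exact hN
    have hm0 : 0 < m := by omega
    have hle : k ≤ M / m := by
      rw [Nat.le_div_iff_mul_le hm0]
      rw [Nat.le_div_iff_mul_le hk0] at h2
      calc k * m = m * k := Nat.mul_comm _ _
        _ ≤ M := h2
    have hlt : M / m < k + 1 := by
      rw [Nat.div_lt_iff_lt_mul hm0]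
      rw [Nat.div_lt_iff_lt_mul (by omega : 0 < k + 1)] at h1
      calc M < m * (k + 1) := h1
        _ = (k + 1) * m := Nat.mul_comm _ _
    have hmN : m ≤ N := by
      have : m ≤ M / k := h2
      have h3 : M / k ≤ M := Nat.div_le_self _ _
      omega
    exact ⟨⟨by omega, hmN⟩, by omega⟩

/-- `(M / c) / M → 1 / c`. -/
lemma congruence_network_key (c : ℕ) (hc : 1 ≤ c) :
    Tendsto (fun M : ℕ => ((M / c : ℕ) : ℝ) / M) atTop (nhds (1 / c)) := by
  have h0 : (0 : ℝ) ≤ 1 / c := by positivity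
  have h1 := (tendsto_nat_floor_mul_div_atTop (R := ℝ) h0).comp tendsto_natCast_atTop_atTop
  refine h1.congr fun M => ?_
  simp only [Function.comp]
  congr 1
  rw [one_div, inv_mul_eq_div, Nat.floor_div_natCast, Nat.floor_natCast]

/-- For fixed `r ≥ 1` and `k ≥ 1`, the fraction of nodes of the congruence network
`G(r,N)` with out-degree `k` converges to `1/(k(k+1))` as `N → ∞`. -/
theorem congruence_network_degree_distribution (r k : ℕ) (hr : 1 ≤ r) (hk : 1 ≤ k) :
    Tendsto
      (fun N : ℕ =>
        (((Finset.Ioc r N).filter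
            (fun m => ((Finset.Ioc m N).filter (fun j => j % m = r)).card = k)).card : ℝ)
          / ((N : ℝ) - r))
      atTop (nhds (1 / ((k : ℝ) * (k + 1)))) := by
  have hkR : (k : ℝ) ≠ 0 := by positivity
  have hk1R : (k : ℝ) + 1 ≠ 0 := by positivity
  -- the limit of the simplified expression
  have hlim : Tendsto (fun M : ℕ => ((M / k - M / (k + 1) : ℕ) : ℝ) / M) atTop
      (nhds (1 / (k : ℝ) - 1 / ((k : ℝ) + 1))) := by
    have h2 : Tendsto (fun M : ℕ => ((M / (k + 1) : ℕ) : ℝ) / M) atTop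
        (nhds (1 / ((k : ℝ) + 1))) := by
      have := congruence_network_key (k + 1) (by omega)
      simpa using this
    refine ((congruence_network_key k hk).sub h2).congr fun M => ?_
    have hle : M / (k + 1) ≤ M / k := Nat.div_le_div_left (Nat.le_succ k) hk
    rw [Nat.cast_sub hle, sub_div]
  have hcomp := hlim.comp (tendsto_sub_atTop_nat r)
  have hval : 1 / (k : ℝ) - 1 / ((k : ℝ) + 1) = 1 / ((k : ℝ) * (k + 1)) := by
    field_simp
    ring
  rw [← hval]
  refine hcomp.congr' ?_
  filter_upwards [eventually_ge_atTop (r * (k + 2) + 1)] with N hN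
  have hexp : r * (k + 2) = r * (k + 1) + r := by ring
  have hrk : r * (k + 1) ≤ N - r := by omega
  have hrN : r ≤ N := by omega
  have hnum : (Finset.Ioc r N).filter
      (fun m => ((Finset.Ioc m N).filter (fun j => j % m = r)).card = k)
      = (Finset.Ioc r N).filter (fun m => (N - r) / m = k) := by
    refine Finset.filter_congr fun m hm => ?_
    rw [congruence_network_outdeg r m N hr (Finset.mem_Ioc.mp hm).1]
  simp only [Function.comp]
  rw [hnum, congruence_network_setB r k N hr hk hrk, Nat.card_Ioc]
  congr 1
  rw [Nat.cast_sub hrN]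
end

section
/- For fixed k ≥ 0, the fraction of nodes of the divisibility network G(0,N) whose out-degree equals k, i.e. (1/N) · #{m : 1 ≤ m ≤ N, out-degree of m equals k}, converges to 1/((k+1)(k+2)) as N → ∞. -/
open Filter

lemma aux_card_filter_dvd (m N : ℕ) (hm : 1 ≤ m) (hmN : m ≤ N) :
    ((Finset.Ioc m N).filter (fun j => m ∣ j)).card = N / m - 1 := by
  have hu : (Finset.Ioc 0 m).filter (fun j => m ∣ j) ∪
      (Finset.Ioc m N).filter (fun j => m ∣ j) =
      (Finset.Ioc 0 N).filter (fun j => m ∣ j) := by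
    rw [← Finset.filter_union, Finset.Ioc_union_Ioc_eq_Ioc (Nat.zero_le m) hmN]
  have hd : Disjoint ((Finset.Ioc 0 m).filter (fun j => m ∣ j))
      ((Finset.Ioc m N).filter (fun j => m ∣ j)) := by
    refine Finset.disjoint_filter_filter ?_
    rw [Finset.disjoint_left]
    intro a ha hb
    simp only [Finset.mem_Ioc] at ha hb
    omega
  have h1 := Nat.Ioc_filter_dvd_card_eq_div N m
  have h2 := Nat.Ioc_filter_dvd_card_eq_div m m
  have hc := Finset.card_union_of_disjoint hd
  rw [hu, h1, h2, Nat.div_self (by omega)] at hc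
  omega

lemma aux_set_eq (k N : ℕ) :
    (Finset.Icc 1 N).filter
      (fun m => ((Finset.Ioc m N).filter (fun j => m ∣ j)).card = k) =
    Finset.Ioc (N / (k + 2)) (N / (k + 1)) := by
  ext m
  simp only [Finset.mem_filter, Finset.mem_Icc, Finset.mem_Ioc]
  constructor
  · rintro ⟨⟨h1, h2⟩, hc⟩
    rw [aux_card_filter_dvd m N h1 h2] at hc
    have hge : 1 ≤ N / m := (Nat.one_le_div_iff (by omega)).mpr h2
    have hEq : N / m = k + 1 := by omega
    constructor
    · rw [Nat.div_lt_iff_lt_mul (by omega : 0 < k + 2)]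
      have : N / m < k + 2 := by omega
      rw [Nat.div_lt_iff_lt_mul (by omega : 0 < m)] at this
      linarith [this]
    · rw [Nat.le_div_iff_mul_le (by omega : 0 < k + 1)]
      have : k + 1 ≤ N / m := by omega
      rw [Nat.le_div_iff_mul_le (by omega : 0 < m)] at this
      linarith [this]
  · rintro ⟨hlo, hhi⟩
    have hm1 : 1 ≤ m := (Nat.zero_le _).trans_lt hlo
    rw [Nat.div_lt_iff_lt_mul (by omega : 0 < k + 2)] at hlo
    rw [Nat.le_div_iff_mul_le (by omega : 0 < k + 1)] at hhi
    have hmN : m ≤ N := by nlinarith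
    have hup : N / m < k + 2 := by
      rw [Nat.div_lt_iff_lt_mul (by omega : 0 < m)]; linarith
    have hdn : k + 1 ≤ N / m := by
      rw [Nat.le_div_iff_mul_le (by omega : 0 < m)]; linarith
    refine ⟨⟨hm1, hmN⟩, ?_⟩
    rw [aux_card_filter_dvd m N hm1 hmN]
    omega

lemma aux_div_tendsto (d : ℕ) (hd : 0 < d) :
    Tendsto (fun N : ℕ => ((N / d : ℕ) : ℝ) / N) atTop (nhds (1 / d)) := by
  have hlow : Tendsto (fun N : ℕ => 1 / (d : ℝ) - 1 / N) atTop (nhds (1 / d)) := by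
    simpa using tendsto_const_nhds.sub (tendsto_one_div_atTop_nhds_zero_nat :
      Tendsto (fun n : ℕ => 1 / (n : ℝ)) atTop (nhds 0))
  refine tendsto_of_tendsto_of_tendsto_of_le_of_le' hlow tendsto_const_nhds ?_ ?_
  · filter_upwards [eventually_ge_atTop 1] with N hN
    have hN0 : (0 : ℝ) < N := by exact_mod_cast hN
    have hd0 : (0 : ℝ) < d := by exact_mod_cast hd
    have h2 : (N : ℝ) < ((N / d : ℕ) : ℝ) * d + d := by
      have hmod := Nat.div_add_mod N d
      have hlt := Nat.mod_lt N hd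
      have : (d : ℝ) * ((N / d : ℕ) : ℝ) + ((N % d : ℕ) : ℝ) = N := by
        exact_mod_cast hmod
      have : ((N % d : ℕ) : ℝ) < d := by exact_mod_cast hlt
      nlinarith [Nat.div_add_mod N d, (by exact_mod_cast Nat.div_add_mod N d :
        (d : ℝ) * ((N / d : ℕ) : ℝ) + ((N % d : ℕ) : ℝ) = N)]
    rw [sub_le_iff_le_add, ← add_div, div_le_div_iff₀ hd0 hN0]
    nlinarith
  · filter_upwards [eventually_ge_atTop 1] with N hN
    have hN0 : (0 : ℝ) < N := by exact_mod_cast hN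
    have hd0 : (0 : ℝ) < d := by exact_mod_cast hd
    have h1 : ((N / d : ℕ) : ℝ) * d ≤ N := by exact_mod_cast Nat.div_mul_le_self N d
    rw [div_le_div_iff₀ hN0 hd0]
    nlinarith

/-- For fixed `k ≥ 0`, the fraction of nodes of the divisibility network `G(0,N)` with
out-degree `k` converges to `1/((k+1)(k+2))` as `N → ∞`. -/
theorem divisibility_network_degree_distribution (k : ℕ) :
    Tendsto
      (fun N : ℕ =>
        (((Finset.Icc 1 N).filter
            (fun m => ((Finset.Ioc m N).filter (fun j => m ∣ j)).card = k)).card : ℝ)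
          / (N : ℝ))
      atTop (nhds (1 / (((k : ℝ) + 1) * ((k : ℝ) + 2)))) := by
  have h1 := aux_div_tendsto (k + 1) (by omega)
  have h2 := aux_div_tendsto (k + 2) (by omega)
  have hsub := h1.sub h2
  have hlim : 1 / ((k + 1 : ℕ) : ℝ) - 1 / ((k + 2 : ℕ) : ℝ)
      = 1 / (((k : ℝ) + 1) * ((k : ℝ) + 2)) := by
    push_cast
    have hk1 : ((k : ℝ) + 1) ≠ 0 := by positivity
    have hk2 : ((k : ℝ) + 2) ≠ 0 := by positivity
    field_simp
    ring
  rw [hlim] at hsub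
  refine hsub.congr (fun N => ?_)
  rw [aux_set_eq k N, Nat.card_Ioc,
    Nat.cast_sub (Nat.div_le_div_left (by omega) (by omega)), sub_div]
end

section
/- For fixed r ≥ 1, the average out-degree of the congruence network G(r,N), namely k̄(N) = (1/(N−r)) ∑_{m=r+1}^{N} ⌊(N−r)/m⌋, satisfies k̄(N) − log(N−r) → 2γ − 1 − ∑_{i=1}^{r} 1/i as N → ∞, where γ is the Euler–Mascheroni constant. In particular the average degree grows logarithmically with the network size. -/
open Filter Real Finset


lemma swap_count (n : ℕ) :
    ∑ m ∈ Finset.Ioc (Nat.sqrt n) n, n / m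
      = ∑ b ∈ Finset.Icc 1 (Nat.sqrt n), (n / b - Nat.sqrt n) := by
  set s := Nat.sqrt n with hs
  have hss : s * s ≤ n := by simpa [pow_two] using Nat.sqrt_le' n
  have hlt : n < (s+1) * (s+1) := by simpa [pow_two, Nat.succ_eq_add_one] using Nat.lt_succ_sqrt' n
  have key : ∀ m ∈ Finset.Ioc s n, n / m = ((Finset.Icc 1 s).filter (fun b => b * m ≤ n)).card := by
    intro m hm
    obtain ⟨hm1, hm2⟩ := Finset.mem_Ioc.mp hm
    have hmpos : 0 < m := lt_of_le_of_lt (Nat.zero_le s) hm1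
    have hle : n / m ≤ s := by
      have h1 : n / m ≤ n / (s + 1) := Nat.div_le_div_left hm1 (Nat.succ_pos s)
      have h2 : n / (s+1) < s + 1 := Nat.div_lt_of_lt_mul hlt
      omega
    have : (Finset.Icc 1 s).filter (fun b => b * m ≤ n) = Finset.Icc 1 (n / m) := by
      ext b
      simp only [Finset.mem_filter, Finset.mem_Icc]
      constructor
      · rintro ⟨⟨hb1, _⟩, hbm⟩
        exact ⟨hb1, (Nat.le_div_iff_mul_le hmpos).mpr hbm⟩
      · rintro ⟨hb1, hb2⟩
        exact ⟨⟨hb1, le_trans hb2 hle⟩, (Nat.le_div_iff_mul_le hmpos).mp hb2⟩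
    rw [this, Nat.card_Icc, Nat.add_sub_cancel]
  have key2 : ∀ b ∈ Finset.Icc 1 s, ((Finset.Ioc s n).filter (fun m => b * m ≤ n)).card = n / b - s := by
    intro b hb
    obtain ⟨hb1, hb2⟩ := Finset.mem_Icc.mp hb
    have hbpos : 0 < b := hb1
    have : (Finset.Ioc s n).filter (fun m => b * m ≤ n) = Finset.Ioc s (n / b) := by
      ext m
      simp only [Finset.mem_filter, Finset.mem_Ioc]
      have hdiv : ∀ m, b * m ≤ n ↔ m ≤ n / b := by
        intro m
        rw [Nat.le_div_iff_mul_le hbpos, mul_comm]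
      have hnb : n / b ≤ n := Nat.div_le_self n b
      constructor
      · rintro ⟨⟨h1, h2⟩, h3⟩
        exact ⟨h1, (hdiv m).mp h3⟩
      · rintro ⟨h1, h2⟩
        exact ⟨⟨h1, le_trans h2 hnb⟩, (hdiv m).mpr h2⟩
    rw [this, Nat.card_Ioc]
  calc ∑ m ∈ Finset.Ioc s n, n / m
      = ∑ m ∈ Finset.Ioc s n, ∑ b ∈ Finset.Icc 1 s, if b * m ≤ n then 1 else 0 := by
        refine Finset.sum_congr rfl fun m hm => ?_
        rw [key m hm, Finset.card_filter]
    _ = ∑ b ∈ Finset.Icc 1 s, ∑ m ∈ Finset.Ioc s n, if b * m ≤ n then 1 else 0 :=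
        Finset.sum_comm
    _ = ∑ b ∈ Finset.Icc 1 s, (n / b - s) := by
        refine Finset.sum_congr rfl fun b hb => ?_
        rw [← Finset.card_filter, key2 b hb]

lemma hyperbola (n : ℕ) :
    ∑ m ∈ Finset.Icc 1 n, n / m + Nat.sqrt n * Nat.sqrt n
      = 2 * ∑ m ∈ Finset.Icc 1 (Nat.sqrt n), n / m := by
  set s := Nat.sqrt n with hs
  have hsn : s ≤ n := Nat.sqrt_le_self n
  have hss : s * s ≤ n := by simpa [pow_two] using Nat.sqrt_le' n
  have hsplit : ∑ m ∈ Finset.Icc 1 s, n / m + ∑ m ∈ Finset.Ioc s n, n / m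
      = ∑ m ∈ Finset.Icc 1 n, n / m := by
    have h := Finset.sum_Ioc_consecutive (fun m => n / m) (Nat.zero_le s) hsn
    simpa [← Finset.Icc_add_one_left_eq_Ioc] using h
  have hlow : ∀ b ∈ Finset.Icc 1 s, s ≤ n / b := by
    intro b hb
    obtain ⟨hb1, hb2⟩ := Finset.mem_Icc.mp hb
    calc s ≤ n / s := (Nat.le_div_iff_mul_le (by omega : 0 < s)).mpr hss
      _ ≤ n / b := Nat.div_le_div_left hb2 hb1
  have hsum : ∑ b ∈ Finset.Icc 1 s, (n / b - s) + s * s = ∑ b ∈ Finset.Icc 1 s, n / b := by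
    have hcrd : s * s = ∑ _b ∈ Finset.Icc 1 s, s := by
      simp [Nat.card_Icc, mul_comm]
    rw [hcrd, ← Finset.sum_add_distrib]
    exact Finset.sum_congr rfl fun b hb => Nat.sub_add_cancel (hlow b hb)
  calc ∑ m ∈ Finset.Icc 1 n, n / m + s * s
      = ∑ m ∈ Finset.Icc 1 s, n / m + (∑ m ∈ Finset.Ioc s n, n / m + s * s) := by omega
    _ = ∑ m ∈ Finset.Icc 1 s, n / m + (∑ b ∈ Finset.Icc 1 s, (n / b - s) + s * s) := by
        rw [swap_count n]
    _ = ∑ m ∈ Finset.Icc 1 s, n / m + ∑ b ∈ Finset.Icc 1 s, n / b := by rw [hsum]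
    _ = 2 * ∑ m ∈ Finset.Icc 1 s, n / m := by ring

open Filter Real

lemma sqrt_tendsto : Tendsto Nat.sqrt atTop atTop := by
  apply tendsto_atTop_atTop.mpr
  intro b
  refine ⟨b ^ 2, fun a ha => ?_⟩
  calc b = Nat.sqrt (b ^ 2) := (Nat.sqrt_eq' b).symm
    _ ≤ Nat.sqrt a := Nat.sqrt_le_sqrt ha

-- s^2/n → 1
lemma sq_div_tendsto : Tendsto (fun n : ℕ => ((Nat.sqrt n : ℝ))^2 / n) atTop (nhds 1) := by
  have h0 : Tendsto (fun n : ℕ => 1 - 2 / (Nat.sqrt n : ℝ) - 1 / (n : ℝ)) atTop (nhds 1) := by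
    have h1 : Tendsto (fun n : ℕ => 2 / (Nat.sqrt n : ℝ)) atTop (nhds 0) := by
      have := (tendsto_const_nhds.div_atTop (tendsto_natCast_atTop_atTop.comp sqrt_tendsto) :
        Tendsto (fun n : ℕ => (2:ℝ) / (Nat.sqrt n : ℝ)) atTop (nhds 0))
      exact this
    have h2 : Tendsto (fun n : ℕ => 1 / (n : ℝ)) atTop (nhds 0) := tendsto_one_div_atTop_nhds_zero_nat
    simpa using (tendsto_const_nhds.sub h1).sub h2
  refine tendsto_of_tendsto_of_tendsto_of_le_of_le' h0 tendsto_const_nhds ?_ ?_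
  · filter_upwards [eventually_ge_atTop 1] with n hn
    set s := Nat.sqrt n with hs
    have hs1 : 1 ≤ s := Nat.one_le_iff_ne_zero.mpr (by
      intro h; have := Nat.sqrt_eq_zero.mp h; omega)
    have hnpos : (0:ℝ) < n := by positivity
    have hspos : (0:ℝ) < s := by positivity
    have hss : (s:ℝ) * s ≤ n := by exact_mod_cast (by simpa [pow_two] using Nat.sqrt_le' n : s * s ≤ n)
    have hlt : (n:ℝ) < (s+1) * (s+1) := by exact_mod_cast (by simpa [pow_two, Nat.succ_eq_add_one] using Nat.lt_succ_sqrt' n : n < (s+1)*(s+1))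
    -- s/n ≤ 1/s
    have hsn : (s:ℝ) / n ≤ 1 / s := by
      rw [div_le_div_iff₀ hnpos hspos]
      nlinarith
    have hexpand : (n:ℝ) < (s:ℝ)^2 + 2*s + 1 := by nlinarith
    rw [le_div_iff₀ hnpos]
    have e2 : (2:ℝ)*s ≤ (2/(s:ℝ))*n := by
      rw [div_mul_eq_mul_div, le_div_iff₀ hspos]; nlinarith
    have e3 : (1/(n:ℝ))*n = 1 := by field_simp
    nlinarith [e2, e3, hexpand]
  · filter_upwards [eventually_ge_atTop 1] with n hn
    have hnpos : (0:ℝ) < n := by positivity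
    have hss : ((Nat.sqrt n : ℝ))^2 ≤ n := by exact_mod_cast Nat.sqrt_le' n
    exact div_le_one_of_le₀ hss hnpos.le

-- for fixed m ≥ 1, (n/m : ℕ)/n → 1/m
lemma div_cast_tendsto (m : ℕ) (hm : 1 ≤ m) :
    Tendsto (fun n : ℕ => ((n / m : ℕ) : ℝ) / n) atTop (nhds (1 / m)) := by
  have hmR : (0:ℝ) < m := by exact_mod_cast hm
  have hlo : Tendsto (fun n : ℕ => 1 / (m:ℝ) - 1 / n) atTop (nhds (1 / m)) := by
    simpa using tendsto_const_nhds.sub (tendsto_one_div_atTop_nhds_zero_nat (𝕜 := ℝ))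
  refine tendsto_of_tendsto_of_tendsto_of_le_of_le' hlo tendsto_const_nhds ?_ ?_
  · filter_upwards [eventually_ge_atTop 1] with n hn
    have hnpos : (0:ℝ) < n := by positivity
    have keyN : n < (n / m + 1) * m := by
      calc n = m * (n/m) + n % m := (Nat.div_add_mod n m).symm
        _ < m * (n/m) + m := by
            have := Nat.mod_lt n (show 0 < m by omega); omega
        _ = (n/m + 1) * m := by ring
    have key : (n:ℝ) < ((n / m : ℕ) + 1) * m := by exact_mod_cast keyN
    rw [sub_le_iff_le_add]
    have h1 : (1:ℝ)/m ≤ (↑(n/m)+1)/n := by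
      rw [div_le_div_iff₀ hmR hnpos]; nlinarith
    have h2 : ((n/m : ℕ):ℝ)/n + 1/n = (↑(n/m)+1)/n := by rw [add_div]
    linarith
  · filter_upwards [eventually_ge_atTop 1] with n hn
    have hnpos : (0:ℝ) < n := by positivity
    have key : ((n / m : ℕ) : ℝ) * m ≤ n := by exact_mod_cast Nat.div_mul_le_self n m
    rw [div_le_div_iff₀ hnpos hmR]
    nlinarith

noncomputable def Efun (n : ℕ) : ℝ :=
  ∑ m ∈ Finset.Icc 1 (Nat.sqrt n), ((n:ℝ)/m - ((n/m : ℕ):ℝ))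

lemma Efun_nonneg (n : ℕ) : 0 ≤ Efun n := by
  apply Finset.sum_nonneg
  intro m hm
  obtain ⟨hm1, _⟩ := Finset.mem_Icc.mp hm
  have : ((n/m : ℕ):ℝ) * m ≤ n := by exact_mod_cast Nat.div_mul_le_self n m
  have hmR : (0:ℝ) < m := by exact_mod_cast hm1
  rw [sub_nonneg, le_div_iff₀ hmR]
  exact this

lemma Efun_le (n : ℕ) : Efun n ≤ Nat.sqrt n := by
  have : Efun n ≤ ∑ _m ∈ Finset.Icc 1 (Nat.sqrt n), (1:ℝ) := by
    apply Finset.sum_le_sum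
    intro m hm
    obtain ⟨hm1, _⟩ := Finset.mem_Icc.mp hm
    have hmpos : 0 < m := hm1
    have hmR : (0:ℝ) < m := by exact_mod_cast hm1
    have keyN : n < (n / m + 1) * m := by
      calc n = m * (n/m) + n % m := (Nat.div_add_mod n m).symm
        _ < m * (n/m) + m := by
            have := Nat.mod_lt n (show 0 < m by omega); omega
        _ = (n/m + 1) * m := by ring
    have key : (n:ℝ) < ((n / m : ℕ) + 1) * m := by exact_mod_cast keyN
    rw [sub_le_iff_le_add, div_le_iff₀ hmR]
    nlinarith
  simpa [Nat.card_Icc] using this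

lemma Ediv_tendsto : Tendsto (fun n : ℕ => Efun n / n) atTop (nhds 0) := by
  have hub : Tendsto (fun n : ℕ => 1 / ((Nat.sqrt n : ℕ):ℝ)) atTop (nhds 0) :=
    tendsto_one_div_atTop_nhds_zero_nat.comp sqrt_tendsto
  refine tendsto_of_tendsto_of_tendsto_of_le_of_le' tendsto_const_nhds hub ?_ ?_
  · filter_upwards [eventually_ge_atTop 1] with n hn
    have hnpos : (0:ℝ) < n := by positivity
    exact div_nonneg (Efun_nonneg n) hnpos.le
  · filter_upwards [eventually_ge_atTop 1] with n hn
    set s := Nat.sqrt n with hs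
    have hs1 : 1 ≤ s := Nat.one_le_iff_ne_zero.mpr (by
      intro h; have := Nat.sqrt_eq_zero.mp h; omega)
    have hnpos : (0:ℝ) < n := by positivity
    have hspos : (0:ℝ) < s := by positivity
    have hss : (s:ℝ) * s ≤ n := by
      exact_mod_cast (by simpa [pow_two] using Nat.sqrt_le' n : s * s ≤ n)
    calc Efun n / n ≤ (s:ℝ) / n := by
          gcongr
          exact Efun_le n
      _ ≤ 1 / s := by rw [div_le_div_iff₀ hnpos hspos]; nlinarith

lemma main_g : Tendsto (fun n : ℕ =>
    ((∑ m ∈ Finset.Icc 1 n, n/m : ℕ):ℝ)/n - Real.log n) atTop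
    (nhds (2 * Real.eulerMascheroniConstant - 1)) := by
  have hγ : Tendsto (fun n : ℕ =>
      2*(((harmonic (Nat.sqrt n)):ℝ) - Real.log (Nat.sqrt n))) atTop
      (nhds (2 * Real.eulerMascheroniConstant)) :=
    (Real.tendsto_harmonic_sub_log.comp sqrt_tendsto).const_mul 2
  have hlog : Tendsto (fun n : ℕ => Real.log (((Nat.sqrt n:ℝ))^2 / n)) atTop (nhds 0) := by
    have := (Real.continuousAt_log one_ne_zero).tendsto.comp sq_div_tendsto
    simpa [Function.comp_def] using this
  have hcomb : Tendsto (fun n : ℕ =>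
      2*(((harmonic (Nat.sqrt n)):ℝ) - Real.log (Nat.sqrt n))
        + Real.log (((Nat.sqrt n:ℝ))^2 / n)
        - ((Nat.sqrt n:ℝ))^2 / n - 2 * (Efun n / n)) atTop
      (nhds (2 * Real.eulerMascheroniConstant - 1)) := by
    have := ((hγ.add hlog).sub sq_div_tendsto).sub (Ediv_tendsto.const_mul 2)
    simpa using this
  apply hcomb.congr'
  filter_upwards [eventually_ge_atTop 1] with n hn
  set s := Nat.sqrt n with hs
  have hs1 : 1 ≤ s := Nat.one_le_iff_ne_zero.mpr (by
    intro h; have := Nat.sqrt_eq_zero.mp h; omega)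
  have hnpos : (0:ℝ) < n := by positivity
  have hspos : (0:ℝ) < s := by positivity
  -- cast hyperbola
  have hhyp : ((∑ m ∈ Finset.Icc 1 n, n/m : ℕ):ℝ) + (s:ℝ)*s
      = 2 * ∑ m ∈ Finset.Icc 1 s, ((n/m : ℕ):ℝ) := by
    exact_mod_cast congrArg (Nat.cast : ℕ → ℝ) (hyperbola n)
  -- T = n * Hs - E
  have hT : ∑ m ∈ Finset.Icc 1 s, ((n/m : ℕ):ℝ)
      = (n:ℝ) * (harmonic s : ℝ) - Efun n := by
    have h1 : (harmonic s : ℝ) = ∑ m ∈ Finset.Icc 1 s, ((m:ℝ))⁻¹ := by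
      rw [harmonic_eq_sum_Icc]; push_cast; rfl
    rw [h1, Finset.mul_sum]
    rw [Efun, ← hs]
    rw [eq_sub_iff_add_eq, ← Finset.sum_add_distrib]
    refine Finset.sum_congr rfl fun m hm => ?_
    ring
  -- log identity
  have hlogid : Real.log (((s:ℝ))^2 / n) = 2 * Real.log s - Real.log n := by
    rw [Real.log_div (by positivity) hnpos.ne', Real.log_pow]
    push_cast; ring
  -- final field computation
  have hA : ((∑ m ∈ Finset.Icc 1 n, n/m : ℕ):ℝ)
      = 2 * ((n:ℝ) * (harmonic s : ℝ) - Efun n) - (s:ℝ)*s := by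
    rw [← hT]; linarith [hhyp]
  rw [hA, hlogid]
  have hsq : ((s:ℝ))^2 = (s:ℝ)*s := sq (s:ℝ) ▸ by ring
  field_simp
  ring

lemma hB_tendsto (r : ℕ) :
    Tendsto (fun n : ℕ => ((∑ m ∈ Finset.Icc 1 r, n/m : ℕ):ℝ)/n) atTop
      (nhds (∑ i ∈ Finset.Icc 1 r, (1:ℝ)/i)) := by
  have : ∀ n : ℕ, ((∑ m ∈ Finset.Icc 1 r, n/m : ℕ):ℝ)/n
      = ∑ m ∈ Finset.Icc 1 r, ((n/m : ℕ):ℝ)/n := by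
    intro n; rw [Nat.cast_sum, Finset.sum_div]
  simp_rw [this]
  apply tendsto_finset_sum
  intro i hi
  exact div_cast_tendsto i (Finset.mem_Icc.mp hi).1



/-- For fixed `r ≥ 1`, the average out-degree
`k̄(N) = (1/(N−r)) ∑_{m=r+1}^{N} ⌊(N−r)/m⌋` of the congruence network `G(r,N)`
satisfies `k̄(N) − log(N−r) → 2γ − 1 − ∑_{i=1}^{r} 1/i` as `N → ∞`, where `γ` is the
Euler–Mascheroni constant.  In particular the average degree grows logarithmically
with the network size. -/
theorem congruence_network_average_degree (r : ℕ) (hr : 1 ≤ r) :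
    Tendsto
      (fun N : ℕ =>
        ((∑ m ∈ Finset.Icc (r + 1) N, (N - r) / m : ℕ) : ℝ) / ((N : ℝ) - r)
          - Real.log ((N : ℝ) - r))
      atTop
      (nhds (2 * Real.eulerMascheroniConstant - 1 - ∑ i ∈ Finset.Icc 1 r, (1 : ℝ) / i)) := by
  have hcomp : Tendsto (fun N : ℕ => N - r) atTop atTop := tendsto_sub_atTop_nat r
  have hgb := (main_g.sub (hB_tendsto r)).comp hcomp
  apply hgb.congr'
  filter_upwards [eventually_ge_atTop (2*r + 2)] with N hN
  set n := N - r with hn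
  have hrN : r ≤ N := by omega
  have hnN : n ≤ N := by omega
  have hrn : r ≤ n := by omega
  have hn1 : 1 ≤ n := by omega
  have hcast : (N:ℝ) - r = (n:ℝ) := by
    rw [hn]; push_cast [hrN]; ring
  have hnpos : (0:ℝ) < n := by positivity
  -- nat identity: B + S = ∑_{Icc 1 N} and ∑_{Icc 1 N} = A
  have hsplit1 : ∑ m ∈ Finset.Icc 1 r, n/m + ∑ m ∈ Finset.Icc (r+1) N, n/m
      = ∑ m ∈ Finset.Icc 1 N, n/m := by
    have h := Finset.sum_Ioc_consecutive (fun m => n / m) (Nat.zero_le r) hrN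
    simpa [← Finset.Icc_add_one_left_eq_Ioc] using h
  have hsplit2 : ∑ m ∈ Finset.Icc 1 N, n/m = ∑ m ∈ Finset.Icc 1 n, n/m := by
    have h := Finset.sum_Ioc_consecutive (fun m => n / m) (Nat.zero_le n) hnN
    have hz : ∑ m ∈ Finset.Ioc n N, n/m = 0 := by
      apply Finset.sum_eq_zero
      intro m hm
      exact Nat.div_eq_of_lt (Finset.mem_Ioc.mp hm).1
    have h' : ∑ m ∈ Finset.Ioc 0 n, n/m + ∑ m ∈ Finset.Ioc n N, n/m
        = ∑ m ∈ Finset.Ioc 0 N, n/m := h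
    rw [hz, add_zero] at h'
    rw [show Finset.Icc 1 N = Finset.Ioc 0 N from (Finset.Icc_add_one_left_eq_Ioc 0 N),
      show Finset.Icc 1 n = Finset.Ioc 0 n from (Finset.Icc_add_one_left_eq_Ioc 0 n)]
    exact h'.symm
  have hS : ((∑ m ∈ Finset.Icc (r + 1) N, n / m : ℕ) : ℝ)
      = ((∑ m ∈ Finset.Icc 1 n, n/m : ℕ):ℝ) - ((∑ m ∈ Finset.Icc 1 r, n/m : ℕ):ℝ) := by
    have : ∑ m ∈ Finset.Icc 1 r, n/m + ∑ m ∈ Finset.Icc (r+1) N, n/m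
        = ∑ m ∈ Finset.Icc 1 n, n/m := by rw [hsplit1, hsplit2]
    have h2 := congrArg (Nat.cast : ℕ → ℝ) this
    rw [Nat.cast_add] at h2
    linarith
  show _ = _
  simp only [Function.comp]
  rw [hcast, hS, sub_div]
  ring
end

section
/- Let r ≥ 1 and N ≥ 2r, let F be a field, and let A be any (N−r) × (N−r) matrix over F, with rows and columns indexed by the nodes r+1, ..., N of the congruence network G(r,N), such that the entry A_{j,i} is nonzero if and only if there is a directed edge from i to j in G(r,N) (i.e. i < j and j ≡ r (mod i)). Then rank(A) = N − 2r. In particular the rank does not depend on the values of the nonzero (link-weight) entries, so G(r,N) is strongly structurally controllable with exactly r driver nodes. -/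
open Matrix

/-- Taking a subset of the rows reduces the rank (rectangular version). -/
private lemma rank_submatrix_rows_le {F : Type*} [Field F] {m n k : Type*}
    [Fintype m] [Fintype n] [Fintype k] (f : k → m) (A : Matrix m n F) :
    (A.submatrix f id).rank ≤ A.rank := by
  have h : A.submatrix f id = A.submatrix f (Equiv.refl n) := rfl
  rw [h, Matrix.rank, Matrix.rank, Matrix.mulVecLin_submatrix,
    LinearMap.range_comp, LinearMap.range_comp,
    show LinearMap.funLeft F F (Equiv.refl n).symm
      = (LinearEquiv.funCongrLeft F F (Equiv.refl n).symm : (n → F) →ₗ[F] (n → F)) from rfl,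
    LinearEquiv.range, Submodule.map_top]
  exact Submodule.finrank_map_le _ _

/-- Let `r ≥ 1`, `N ≥ 2r`, `F` a field, and let `A` be any `(N−r) × (N−r)` matrix over
`F` indexed by the nodes `r+1, …, N` of the congruence network `G(r,N)` (node `i` of the
index type `Fin (N−r)` represents the number `r+1+i`), with `A j i ≠ 0` iff there is an
edge from node `i` to node `j` (i.e. `i < j` and `j ≡ r (mod i)` as numbers).  Then
`rank A = N − 2r`, independently of the values of the nonzero entries: `G(r,N)` is
strongly structurally controllable with exactly `r` driver nodes. -/
theorem congruence_network_coupling_rank (r N : ℕ) (hr : 1 ≤ r) (hN : 2 * r ≤ N)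
    (F : Type*) [Field F] (A : Matrix (Fin (N - r)) (Fin (N - r)) F)
    (hA : ∀ i j : Fin (N - r),
      A j i ≠ 0 ↔ (r + 1 + (i : ℕ) < r + 1 + (j : ℕ) ∧
        (r + 1 + (j : ℕ)) % (r + 1 + (i : ℕ)) = r)) :
    A.rank = N - 2 * r := by
  set d := N - 2 * r with hd
  -- the key arithmetic fact: a nonzero entry forces r+1+i ≤ j+1
  have key : ∀ i j : Fin (N - r), A j i ≠ 0 → r + 1 + (i : ℕ) ≤ (j : ℕ) + 1 := by
    intro i j h
    obtain ⟨hlt, hmod⟩ := (hA i j).mp h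
    have hdvd : (r + 1 + (i : ℕ)) ∣ (r + 1 + (j : ℕ)) - (r + 1 + (j : ℕ)) % (r + 1 + (i : ℕ)) :=
      Nat.dvd_sub_mod _
    rw [hmod] at hdvd
    have h2 : (r + 1 + (j : ℕ)) - r = (j : ℕ) + 1 := by omega
    rw [h2] at hdvd
    exact Nat.le_of_dvd (by omega) hdvd
  -- columns with index ≥ d are zero
  have zerocol : ∀ i j : Fin (N - r), d ≤ (i : ℕ) → A j i = 0 := by
    intro i j hi
    by_contra h
    have := key i j h
    have := j.isLt
    omega
  -- embeddings
  have hdrow : ∀ k : Fin d, (k : ℕ) + r < N - r := by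
    intro k; have := k.isLt; omega
  have hdcol : ∀ k : Fin d, (k : ℕ) < N - r := by
    intro k; have := k.isLt; omega
  set rowemb : Fin d → Fin (N - r) := fun k => ⟨(k : ℕ) + r, hdrow k⟩ with hrowemb
  set colemb : Fin d → Fin (N - r) := fun k => ⟨(k : ℕ), hdcol k⟩ with hcolemb
  set C : Matrix (Fin (N - r)) (Fin d) F := A.submatrix id colemb with hC
  set M : Matrix (Fin d) (Fin d) F := A.submatrix rowemb colemb with hM
  -- M is lower triangular with nonzero diagonal
  have htri : M.BlockTriangular OrderDual.toDual := by
    intro k l hkl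
    simp only [OrderDual.toDual_lt_toDual] at hkl
    by_contra h
    have := key (colemb l) (rowemb k) h
    simp only [hrowemb, hcolemb] at this
    exact absurd this (by simp only [Fin.lt_def] at hkl; omega)
  have hdiag : ∀ k : Fin d, M k k ≠ 0 := by
    intro k
    apply (hA (colemb k) (rowemb k)).mpr
    constructor
    · simp only [hrowemb, hcolemb]; omega
    · simp only [hrowemb, hcolemb]
      have h1 : r + 1 + ((k : ℕ) + r) = (r + 1 + (k : ℕ)) + r := by omega
      rw [h1, Nat.add_mod_left, Nat.mod_eq_of_lt (by omega)]
  have hdet : M.det ≠ 0 := by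
    rw [Matrix.det_of_lowerTriangular M htri]
    exact Finset.prod_ne_zero_iff.mpr fun k _ => hdiag k
  have hMrank : M.rank = d := by
    rw [Matrix.rank_of_isUnit M ((Matrix.isUnit_iff_isUnit_det M).mpr
      (isUnit_iff_ne_zero.mpr hdet))]
    exact Fintype.card_fin d
  -- rank C = rank A via column spans
  have hspan : Submodule.span F (Set.range Cᵀ) = Submodule.span F (Set.range Aᵀ) := by
    apply le_antisymm
    · apply Submodule.span_mono
      rintro _ ⟨l, rfl⟩
      exact ⟨colemb l, rfl⟩
    · rw [Submodule.span_le]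
      rintro _ ⟨i, rfl⟩
      by_cases hi : (i : ℕ) < d
      · exact Submodule.subset_span ⟨⟨(i : ℕ), hi⟩, rfl⟩
      · have h0 : Aᵀ i = 0 := funext fun j => zerocol i j (by omega)
        rw [h0]
        exact Submodule.zero_mem _
  have hCA : C.rank = A.rank := by
    rw [Matrix.rank_eq_finrank_span_cols, Matrix.rank_eq_finrank_span_cols]
    change Module.finrank F ↥(Submodule.span F (Set.range Cᵀ)) =
      Module.finrank F ↥(Submodule.span F (Set.range Aᵀ))
    rw [hspan]
  have hMC : M.rank ≤ C.rank := by
    have h : M = C.submatrix rowemb id := rfl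
    rw [h]
    exact rank_submatrix_rows_le rowemb C
  have hCd : C.rank ≤ d := (Matrix.rank_le_card_width C).trans (Fintype.card_fin d).le
  omega
end

section
/- Let N ≥ 1, let F be a field, and let A be any N × N matrix over F, with rows and columns indexed by the nodes 1, ..., N of the divisibility network G(0,N), such that the entry A_{j,i} is nonzero if and only if there is a directed edge from i to j in G(0,N) (i.e. i < j and i ∣ j). Then rank(A) = ⌊N/2⌋. In particular one must control N − ⌊N/2⌋ = ⌈N/2⌉ driver nodes to fully control G(0,N). -/
open Matrix

section Aux
variable (N : ℕ) (F : Type*) [Field F]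

theorem divnet_rank_aux (A : Matrix (Fin N) (Fin N) F)
    (hA : ∀ i j : Fin N,
      A j i ≠ 0 ↔ ((i : ℕ) + 1 < (j : ℕ) + 1 ∧ ((i : ℕ) + 1) ∣ ((j : ℕ) + 1))) :
    A.rank = N / 2 := by
  set K := N / 2 with hK
  -- helper: column zero for large i
  have hzero : ∀ i j : Fin N, K ≤ (i : ℕ) → A j i = 0 := by
    intro i j hi
    by_contra h
    obtain ⟨hlt, hdvd⟩ := (hA i j).1 h
    obtain ⟨c, hc⟩ := hdvd
    have hc2 : 2 ≤ c := by
      rcases Nat.lt_or_ge c 2 with h2 | h2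
      · interval_cases c <;> omega
      · exact h2
    have : 2 * ((i:ℕ)+1) ≤ (j:ℕ)+1 := by
      calc 2 * ((i:ℕ)+1) ≤ c * ((i:ℕ)+1) := Nat.mul_le_mul_right _ hc2
        _ = (j:ℕ)+1 := by rw [hc, Nat.mul_comm]
    have hjN : (j:ℕ) + 1 ≤ N := j.isLt
    omega
  have g : Fin K → Fin N := fun m => ⟨m, lt_of_lt_of_le m.isLt (Nat.div_le_self N 2)⟩
  -- upper bound
  have hub : A.rank ≤ K := by
    classical
    set g : Fin K → Fin N := fun m => ⟨m, lt_of_lt_of_le m.isLt (Nat.div_le_self N 2)⟩ with hg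
    set B : Matrix (Fin N) (Fin K) F := fun j m => A j (g m) with hB
    set C : Matrix (Fin K) (Fin N) F := fun m i => if g m = i then 1 else 0 with hC
    have hBC : A = B * C := by
      ext j i
      rw [Matrix.mul_apply]
      by_cases hi : (i : ℕ) < K
      · rw [Finset.sum_eq_single ⟨(i:ℕ), hi⟩]
        · simp [hB, hC, hg, Fin.ext_iff]
        · intro m _ hm
          have : g m ≠ i := by
            simp only [hg, Fin.ext_iff]
            simpa [Fin.ext_iff] using hm
          simp [hB, hC, this]
        · simp
      · rw [hzero i j (le_of_not_gt hi)]
        symm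
        apply Finset.sum_eq_zero
        intro m _
        have hmi : (g m : ℕ) = (m : ℕ) := rfl
        have : g m ≠ i := by
          rw [Ne, Fin.ext_iff, hmi]
          have := m.isLt
          omega
        simp [hC, this]
    calc A.rank = (B * C).rank := by rw [hBC]
      _ ≤ B.rank := Matrix.rank_mul_le_left B C
      _ ≤ Fintype.card (Fin K) := Matrix.rank_le_card_width B
      _ = K := Fintype.card_fin K
  -- lower bound
  have hlb : K ≤ A.rank := by
    classical
    set g : Fin K → Fin N := fun m => ⟨m, lt_of_lt_of_le m.isLt (Nat.div_le_self N 2)⟩ with hg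
    have hf : ∀ m : Fin K, 2 * (m:ℕ) + 1 < N := by
      intro m; have := m.isLt; omega
    set f : Fin K → Fin N := fun m => ⟨2 * m + 1, hf m⟩ with hfdef
    set B : Matrix (Fin K) (Fin K) F := A.submatrix f g with hB
    -- B is lower triangular with nonzero diagonal
    have hdiag : ∀ m : Fin K, B m m ≠ 0 := by
      intro m
      rw [hB]
      simp only [Matrix.submatrix_apply]
      rw [hA]
      constructor
      · simp [hfdef, hg]; omega
      · simp only [hfdef, hg]
        exact ⟨2, by ring⟩
    have htri : ∀ m m' : Fin K, m < m' → B m m' = 0 := by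
      intro m m' hlt
      rw [hB]
      by_contra h
      simp only [Matrix.submatrix_apply] at h
      obtain ⟨h1, h2⟩ := (hA _ _).1 h
      simp only [hfdef, hg] at h1 h2
      obtain ⟨c, hc⟩ := h2
      have hmm : (m:ℕ) < (m':ℕ) := hlt
      rcases Nat.lt_or_ge c 2 with h2 | h2
      · interval_cases c <;> omega
      · have h3 : ((m':ℕ)+1)*2 ≤ ((m':ℕ)+1)*c := Nat.mul_le_mul_left _ h2
        linarith
    have hdet : B.det ≠ 0 := by
      have : B.BlockTriangular OrderDual.toDual := by
        intro i j hij
        exact htri i j (by exact hij)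
      rw [Matrix.det_of_lowerTriangular B this]
      exact Finset.prod_ne_zero_iff.2 fun m _ => hdiag m
    have hBrank : B.rank = K := by
      rw [Matrix.rank_of_isUnit B ((Matrix.isUnit_iff_isUnit_det B).2 (isUnit_iff_ne_zero.2 hdet))]
      exact Fintype.card_fin K
    -- B = P * A * Q
    set P : Matrix (Fin K) (Fin N) F := fun m j => if f m = j then 1 else 0 with hP
    set Q : Matrix (Fin N) (Fin K) F := fun i m => if g m = i then 1 else 0 with hQ
    have hPAQ : B = P * (A * Q) := by
      ext m m'
      rw [Matrix.mul_apply]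
      rw [Finset.sum_eq_single (f m)]
      · rw [Matrix.mul_apply, Finset.sum_eq_single (g m')]
        · simp [hB, hP, hQ]
        · intro i _ hi; simp [hQ, Ne.symm, hi, (Ne.symm hi : ¬ g m' = i)]
        · simp
      · intro j _ hj
        simp [hP, (Ne.symm hj : ¬ f m = j)]
      · simp
    calc K = B.rank := hBrank.symm
      _ = (P * (A * Q)).rank := by rw [hPAQ]
      _ ≤ (A * Q).rank := Matrix.rank_mul_le_right P (A * Q)
      _ ≤ A.rank := Matrix.rank_mul_le_left A Q
  omega

end Aux



/-- Let `N ≥ 1`, `F` a field, and let `A` be any `N × N` matrix over `F` indexed by the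
nodes `1, …, N` of the divisibility network `G(0,N)` (index `i : Fin N` represents the
number `i+1`), with `A j i ≠ 0` iff there is an edge from node `i` to node `j`
(i.e. `i < j` and `i ∣ j` as numbers).  Then `rank A = ⌊N/2⌋`; in particular one must
control `N − ⌊N/2⌋ = ⌈N/2⌉` driver nodes to fully control `G(0,N)`. -/
theorem divisibility_network_coupling_rank (N : ℕ) (hN : 1 ≤ N)
    (F : Type*) [Field F] (A : Matrix (Fin N) (Fin N) F)
    (hA : ∀ i j : Fin N,
      A j i ≠ 0 ↔ ((i : ℕ) + 1 < (j : ℕ) + 1 ∧ ((i : ℕ) + 1) ∣ ((j : ℕ) + 1))) :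
    A.rank = N / 2 ∧ N - A.rank = (N + 1) / 2 := by
  have h := divnet_rank_aux N F A hA
  exact ⟨h, by omega⟩
end

section
/- Let r ≥ 1 and N ≥ 2r, let F be a field, and let A be any (N−r) × (N−r) matrix over F, indexed by the nodes r+1, ..., N of the congruence network G(r,N), whose entry A_{j,i} is nonzero if and only if there is an edge from i to j in G(r,N). Let B be the (N−r) × r matrix whose l-th column is the standard basis vector supported on the node r+l (for l = 1, ..., r). Then the augmented matrix [A B] has full row rank N − r. That is, the exact-controllability condition rank[−A, B] = N − r holds when the r input signals are imposed on the r smallest nodes r+1, ..., 2r (the chain roots), for any choice of nonzero link weights. -/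
open Matrix

lemma cn_aux (r N : ℕ) (hr : 1 ≤ r)
    (F : Type*) [Field F] (A : Matrix (Fin (N - r)) (Fin (N - r)) F)
    (hA : ∀ i j : Fin (N - r),
      A j i ≠ 0 ↔ (r + 1 + (i : ℕ) < r + 1 + (j : ℕ) ∧
        (r + 1 + (j : ℕ)) % (r + 1 + (i : ℕ)) = r))
    (B : Matrix (Fin (N - r)) (Fin r) F)
    (hB : ∀ (j : Fin (N - r)) (l : Fin r), B j l = if (j : ℕ) = (l : ℕ) then 1 else 0) :
    (Matrix.fromCols A B).rank = N - r := by
  have hli : LinearIndependent F (Matrix.fromCols A B).row := by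
    rw [Fintype.linearIndependent_iff]
    intro g hg
    have hcol : ∀ c, ∑ k, g k * (Matrix.fromCols A B) k c = 0 := by
      intro c
      have := congrFun hg c
      simpa [Finset.sum_apply] using this
    -- main step
    have main : ∀ j : Fin (N - r), (∀ k : Fin (N - r), (j : ℕ) < (k : ℕ) → g k = 0) →
        g j = 0 := by
      intro j ih
      rcases lt_or_ge (j : ℕ) r with hjr | hjr
      · -- use B column
        have h := hcol (Sum.inr ⟨(j : ℕ), hjr⟩)
        rw [Finset.sum_eq_single j] at h
        · simpa [Matrix.fromCols, hB] using h
        · intro k _ hk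
          have : (k : ℕ) ≠ (j : ℕ) := fun h' => hk (Fin.ext h')
          simp [Matrix.fromCols, hB, this]
        · simp
      · -- use A column j - r
        have hjN : (j : ℕ) - r < N - r := lt_of_le_of_lt (Nat.sub_le _ _) j.isLt
        set i : Fin (N - r) := ⟨(j : ℕ) - r, hjN⟩ with hi
        have hiv : r + 1 + (i : ℕ) = (j : ℕ) + 1 := by
          simp only [hi]
          omega
        have hAji : A j i ≠ 0 := by
          rw [hA]
          constructor
          · omega
          · rw [hiv]
            have : r + 1 + (j : ℕ) = ((j : ℕ) + 1) * 1 + r := by ring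
            rw [this, Nat.mul_add_mod, Nat.mod_eq_of_lt (by omega)]
        have hbig : ∀ k : Fin (N - r), A k i ≠ 0 → (j : ℕ) ≤ (k : ℕ) := by
          intro k hk
          rw [hA, hiv] at hk
          obtain ⟨h1, h2⟩ := hk
          -- (r+1+k) % (j+1) = r, r+1+k > j+1
          have hq := Nat.div_add_mod (r + 1 + (k : ℕ)) ((j : ℕ) + 1)
          rw [h2] at hq
          have hqpos : 1 ≤ (r + 1 + (k : ℕ)) / ((j : ℕ) + 1) := by
            by_contra hc
            push_neg at hc
            interval_cases h : (r + 1 + (k : ℕ)) / ((j : ℕ) + 1)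
            omega
          nlinarith [Nat.le_div_iff_mul_le (show 0 < (j : ℕ) + 1 by omega) |>.mp hqpos]
        have h := hcol (Sum.inl i)
        rw [Finset.sum_eq_single j] at h
        · have : g j * A j i = 0 := by simpa [Matrix.fromCols] using h
          exact (mul_eq_zero.mp this).resolve_right hAji
        · intro k _ hk
          by_cases hz : A k i = 0
          · simp [Matrix.fromCols, hz]
          · have hkj : (j : ℕ) < (k : ℕ) := by
              rcases lt_or_eq_of_le (hbig k hz) with h' | h'
              · exact h'
              · exact absurd (Fin.ext h'.symm) hk
            simp [Matrix.fromCols, ih k hkj]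
        · simp
    have key : ∀ d : ℕ, ∀ j : Fin (N - r), (N - r) - 1 - (j : ℕ) ≤ d → g j = 0 := by
      intro d
      induction d with
      | zero =>
        intro j hj
        exact main j (fun k hk => absurd hk (by omega))
      | succ d ihd =>
        intro j _
        exact main j (fun k hk => ihd k (by omega))
    intro j
    exact key ((N - r) - 1 - (j : ℕ)) j le_rfl
  have := hli.rank_matrix
  simpa using this

/-- Let `r ≥ 1`, `N ≥ 2r`, `F` a field, `A` any `(N−r) × (N−r)` matrix over `F` indexed
by the nodes `r+1, …, N` of the congruence network `G(r,N)` (index `i : Fin (N−r)`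
represents the number `r+1+i`), with `A j i ≠ 0` iff there is an edge from node `i` to
node `j`.  Let `B` be the `(N−r) × r` matrix whose `l`-th column is the standard basis
vector supported on the node `r+l` (0-based: the node represented by index `l`).  Then
the augmented matrices `[A B]` and `[−A B]` have full row rank `N − r`: the
exact-controllability condition holds when the `r` inputs drive the chain roots
`r+1, …, 2r`, for any choice of nonzero link weights. -/
theorem congruence_network_exact_controllability (r N : ℕ) (hr : 1 ≤ r) (hN : 2 * r ≤ N)
    (F : Type*) [Field F] (A : Matrix (Fin (N - r)) (Fin (N - r)) F)
    (hA : ∀ i j : Fin (N - r),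
      A j i ≠ 0 ↔ (r + 1 + (i : ℕ) < r + 1 + (j : ℕ) ∧
        (r + 1 + (j : ℕ)) % (r + 1 + (i : ℕ)) = r))
    (B : Matrix (Fin (N - r)) (Fin r) F)
    (hB : ∀ (j : Fin (N - r)) (l : Fin r), B j l = if (j : ℕ) = (l : ℕ) then 1 else 0) :
    (Matrix.fromCols A B).rank = N - r ∧ (Matrix.fromCols (-A) B).rank = N - r := by
  refine ⟨cn_aux r N hr F A hA B hB, cn_aux r N hr F (-A) ?_ B hB⟩
  intro i j
  rw [← hA i j]
  simp [Matrix.neg_apply]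
end
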